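/- For every ε > 0 and every positive integer t₀, there exist integers T₀ ≥ t₀ and L₀ such that every graph G on n ≥ L₀ vertices admits a partition of its vertex set into t parts V₁, …, V_t with t₀ ≤ t ≤ T₀, where the parts differ in size by at most 1, and all but at most ε·t² of the pairs (Vᵢ, Vⱼ) are ε-regular. -/

import Mathlib

open Finset SimpleGraph
open scoped Classical

/-- A pair `(A, B)` of vertex sets is `ε`-regular: for all `X ⊆ A`, `Y ⊆ B` with
`|X| ≥ ε|A|`, `|Y| ≥ ε|B|`, the densities satisfy `|d(X,Y) − d(A,B)| ≤ ε`. -/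
def IsRegularPair {V : Type*} (G : SimpleGraph V) [DecidableRel G.Adj]
    (ε : ℝ) (A B : Finset V) : Prop :=
  ∀ X ⊆ A, ∀ Y ⊆ B, ε * A.card ≤ X.card → ε * B.card ≤ Y.card →
    |(G.edgeDensity X Y : ℝ) - (G.edgeDensity A B : ℝ)| ≤ ε

lemma isUniform_imp_regular {V : Type*} [Fintype V] (G : SimpleGraph V)
    [DecidableRel G.Adj] (ε : ℝ) (A B : Finset V)
    (h : G.IsUniform ε A B) : IsRegularPair G ε A B := by
  intro X hX Y hY hX' hY'
  exact (h hX hY (by linarith [mul_comm ε (A.card : ℝ)])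
    (by linarith [mul_comm ε (B.card : ℝ)])).le

theorem stmt_0 (ε : ℝ) (hε : 0 < ε) (t₀ : ℕ) (ht₀ : 0 < t₀) :
    ∃ T₀ L₀ : ℕ, t₀ ≤ T₀ ∧
      ∀ (n : ℕ), L₀ ≤ n → ∀ (G : SimpleGraph (Fin n)) (_ : DecidableRel G.Adj),
        ∃ (t : ℕ) (P : Fin t → Finset (Fin n)),
          t₀ ≤ t ∧ t ≤ T₀ ∧
          (∀ i j, i ≠ j → Disjoint (P i) (P j)) ∧
          (Finset.univ.biUnion P = Finset.univ) ∧
          (∀ i j, (P i).card ≤ (P j).card + 1) ∧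
          ((((Finset.univ : Finset (Fin t × Fin t))).filter
              (fun p => p.1 ≠ p.2 ∧ ¬ IsRegularPair G ε (P p.1) (P p.2))).card : ℝ)
            ≤ ε * t ^ 2 := by
  refine ⟨SzemerediRegularity.bound ε t₀, t₀, SzemerediRegularity.le_bound ε t₀,
    fun n hn G _ => ?_⟩
  have hcard : t₀ ≤ Fintype.card (Fin n) := by simpa using hn
  obtain ⟨P, hequi, hl, hu, hunif⟩ := szemeredi_regularity G hε hcard
  set t := P.parts.card with ht
  set e : Fin t → Finset (Fin n) := fun i => ((P.parts.equivFin.symm i : P.parts) : Finset (Fin n))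
  have he_inj : Function.Injective e := fun i j hij => by
    have := Subtype.coe_injective hij
    exact P.parts.equivFin.symm.injective this
  have he_mem : ∀ i, e i ∈ P.parts := fun i => (P.parts.equivFin.symm i).2
  refine ⟨t, e, hl, hu, ?_, ?_, ?_, ?_⟩
  · intro i j hij
    exact P.disjoint (he_mem i) (he_mem j) (fun h => hij (he_inj h))
  · apply Finset.eq_univ_of_forall
    intro x
    obtain ⟨A, hA, hxA⟩ := P.exists_mem (mem_univ x)
    refine Finset.mem_biUnion.2 ⟨P.parts.equivFin ⟨A, hA⟩, mem_univ _, ?_⟩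
    simpa [e] using hxA
  · intro i j
    exact hequi (he_mem i) (he_mem j)
  · have key : ((Finset.univ : Finset (Fin t × Fin t)).filter
        (fun p => p.1 ≠ p.2 ∧ ¬ IsRegularPair G ε (e p.1) (e p.2))).card
        ≤ (P.nonUniforms G ε).card := by
      apply Finset.card_le_card_of_injOn (fun p => (e p.1, e p.2))
      · intro p hp
        simp only [Finset.mem_coe, mem_filter, mem_univ, true_and] at hp ⊢
        rw [Finpartition.mk_mem_nonUniforms]
        exact ⟨he_mem _, he_mem _, fun h => hp.1 (he_inj h),
          fun h => hp.2 (isUniform_imp_regular G ε _ _ h)⟩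
      · intro p _ q _ h
        have h1 := he_inj (congrArg Prod.fst h)
        have h2 := he_inj (congrArg Prod.snd h)
        exact Prod.ext h1 h2
    have h2 : ((P.nonUniforms G ε).card : ℝ) ≤ (t * (t - 1) : ℕ) * ε := hunif
    have h3 : ((t * (t - 1) : ℕ) : ℝ) ≤ (t : ℝ) ^ 2 := by
      have : t * (t - 1) ≤ t ^ 2 := by
        calc t * (t - 1) ≤ t * t := Nat.mul_le_mul_left _ (Nat.sub_le _ _)
        _ = t ^ 2 := (sq t).symm
      exact_mod_cast this
    calc (((Finset.univ : Finset (Fin t × Fin t)).filter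
          (fun p => p.1 ≠ p.2 ∧ ¬ IsRegularPair G ε (e p.1) (e p.2))).card : ℝ)
        ≤ ((P.nonUniforms G ε).card : ℝ) := by exact_mod_cast key
      _ ≤ (t * (t - 1) : ℕ) * ε := h2
      _ ≤ (t : ℝ) ^ 2 * ε := by nlinarith
      _ = ε * t ^ 2 := mul_comm _ _
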